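/- arXiv:2003.12983 — 4 statements merged into one kernel-verified Lean document; each statement's English description precedes it below -/
import Mathlib

section
/- Let β > 0, τ > 0 and L ≥ 0 be real numbers. Let M_Ω ∈ ℝ^{n_Ω×n_Ω} be diagonal with positive diagonal entries, let M_Γ ∈ ℝ^{n_Γ×n_Γ} be symmetric positive definite, and let L_Ω ∈ ℝ^{n_Ω×n_Ω} and L_Γ ∈ ℝ^{n_Γ×n_Γ} be arbitrary real matrices. Suppose U, U⁻, μ ∈ ℝ^{n_Ω} and θ ∈ ℝ^{n_Γ} satisfy the compatibility condition (L/(L+1))·(M_Ω|_{ΓΓ})⁻¹·(L_Ω μ)|_Γ − (1/(L+1))·(M_Ω|_{ΓΓ})⁻¹·M_Γ·(βθ − μ|_Γ) = (L/(L+1))·M_Γ⁻¹·L_Γ·θ + β·(1/(L+1))·(βθ − μ|_Γ) and the combined discrete equation M_Ω(U − U⁻) + β⁻¹·ext(M_Γ(U|_Γ − U⁻|_Γ)) + τ·L_Ω·μ + τ·β⁻¹·ext(L_Γ·θ) = 0. Then the boundary equation holds individually: β⁻¹·(L/(L+1))·M_Γ·(U|_Γ − U⁻|_Γ) + τ·β⁻¹·(L/(L+1))·L_Γ·θ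 + τ·(1/(L+1))·M_Γ·(βθ − μ|_Γ) = 0. -/
open Matrix

/-- Restriction of a bulk vector (indexed by `Fin nΓ ⊕ Fin nI`, boundary
coordinates first) to its boundary coordinates. -/
def restrΓ {nΓ nI : ℕ} (v : Fin nΓ ⊕ Fin nI → ℝ) : Fin nΓ → ℝ := fun i => v (Sum.inl i)

/-- Extension of a boundary vector by zero in the interior coordinates. -/
def extΩ {nΓ nI : ℕ} (x : Fin nΓ → ℝ) : Fin nΓ ⊕ Fin nI → ℝ := Sum.elim x 0

/-- Lemma 5.3 of the paper. If `(U, μ, θ)` satisfies the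
compatibility condition (5.8) and the combined discrete equation (5.16), then
the boundary evolution equation (5.19) holds individually. Here `M_Ω` is
diagonal with positive diagonal entries, `M_Γ` is symmetric positive definite,
and `L_Ω`, `L_Γ` are arbitrary. -/
theorem boundary_equation_individually (nΓ nI : ℕ) (hnΓ : 1 ≤ nΓ)
    (β τ L : ℝ) (hβ : 0 < β) (hτ : 0 < τ) (hL : 0 ≤ L)
    (MΩ : Matrix (Fin nΓ ⊕ Fin nI) (Fin nΓ ⊕ Fin nI) ℝ)
    (dΩ : Fin nΓ ⊕ Fin nI → ℝ) (hdΩ : ∀ i, 0 < dΩ i) (hMΩ : MΩ = Matrix.diagonal dΩ)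
    (MΓ : Matrix (Fin nΓ) (Fin nΓ) ℝ) (hMΓ : MΓ.PosDef)
    (LΩ : Matrix (Fin nΓ ⊕ Fin nI) (Fin nΓ ⊕ Fin nI) ℝ)
    (LΓ : Matrix (Fin nΓ) (Fin nΓ) ℝ)
    (U U' μ : Fin nΓ ⊕ Fin nI → ℝ) (θ : Fin nΓ → ℝ)
    -- compatibility condition (5.8)
    (compat :
      (L / (L + 1)) • (MΩ.submatrix Sum.inl Sum.inl)⁻¹.mulVec (restrΓ (LΩ.mulVec μ))
        - (1 / (L + 1)) • (MΩ.submatrix Sum.inl Sum.inl)⁻¹.mulVec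
            (MΓ.mulVec (β • θ - restrΓ μ))
      = (L / (L + 1)) • MΓ⁻¹.mulVec (LΓ.mulVec θ)
        + (β * (1 / (L + 1))) • (β • θ - restrΓ μ))
    -- combined discrete equation (5.16)
    (combined :
      MΩ.mulVec (U - U') + β⁻¹ • extΩ (MΓ.mulVec (restrΓ U - restrΓ U'))
        + τ • LΩ.mulVec μ + (τ * β⁻¹) • extΩ (LΓ.mulVec θ) = 0) :
    -- boundary equation (5.19)
    (β⁻¹ * (L / (L + 1))) • MΓ.mulVec (restrΓ U - restrΓ U')
      + (τ * β⁻¹ * (L / (L + 1))) • LΓ.mulVec θ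
      + (τ * (1 / (L + 1))) • MΓ.mulVec (β • θ - restrΓ μ) = 0 := by
  have hβ' : β ≠ 0 := ne_of_gt hβ
  have hβinv : β * β⁻¹ = 1 := mul_inv_cancel₀ hβ'
  have hdet : IsUnit MΓ.det := hMΓ.det_pos.ne'.isUnit
  have hMi : MΓ⁻¹ * MΓ = 1 := Matrix.nonsing_inv_mul MΓ hdet
  have hiM : MΓ * MΓ⁻¹ = 1 := Matrix.mul_nonsing_inv MΓ hdet
  set s := L / (L + 1) with hs
  set t := 1 / (L + 1) with ht
  set w := restrΓ U - restrΓ U' with hw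
  set c := β • θ - restrΓ μ with hc
  set q := MΓ⁻¹.mulVec (LΓ.mulVec θ) with hq
  set d' : Fin nΓ → ℝ := fun i => dΩ (Sum.inl i) with hd'
  have hd'pos : ∀ i, 0 < d' i := fun i => hdΩ _
  have hD : MΩ.submatrix Sum.inl Sum.inl = Matrix.diagonal d' := by
    subst hMΩ
    ext i j
    by_cases h : i = j <;>
      simp [Matrix.diagonal, Matrix.submatrix_apply, h, hd']
  have hDinv : (MΩ.submatrix Sum.inl Sum.inl)⁻¹
      = Matrix.diagonal (fun i => (d' i)⁻¹) := by
    rw [hD]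
    apply Matrix.inv_eq_right_inv
    rw [Matrix.diagonal_mul_diagonal]
    have h1 : (fun i => d' i * (d' i)⁻¹) = (1 : Fin nΓ → ℝ) :=
      funext fun i => mul_inv_cancel₀ (ne_of_gt (hd'pos i))
    rw [h1]
    exact Matrix.diagonal_one
  -- pointwise form of the combined equation on the boundary
  have hstar : ∀ i, d' i * w i + β⁻¹ * (MΓ.mulVec w) i
      + τ * (restrΓ (LΩ.mulVec μ)) i + τ * β⁻¹ * (LΓ.mulVec θ) i = 0 := by
    intro i
    have h0 := congrFun combined (Sum.inl i)
    simp only [hMΩ, Pi.add_apply, Pi.smul_apply, Pi.zero_apply, Matrix.mulVec_diagonal,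
      extΩ, Sum.elim_inl, smul_eq_mul, Pi.sub_apply] at h0
    have hwi : w i = U (Sum.inl i) - U' (Sum.inl i) := rfl
    have hbi : restrΓ (LΩ.mulVec μ) i = (LΩ.mulVec μ) (Sum.inl i) := rfl
    rw [hwi, hbi]
    linarith [h0]
  -- pointwise form of the compatibility condition, multiplied by `d' i`
  have compat' : ∀ i, s * (restrΓ (LΩ.mulVec μ)) i - t * (MΓ.mulVec c) i
      = d' i * (s * q i + β * t * c i) := by
    intro i
    have h0 := congrFun compat i
    rw [hDinv] at h0
    simp only [Pi.add_apply, Pi.sub_apply, Pi.smul_apply, Matrix.mulVec_diagonal,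
      smul_eq_mul] at h0
    have hdne : d' i ≠ 0 := ne_of_gt (hd'pos i)
    field_simp at h0 ⊢
    linarith [h0]
  -- the vector `h` and the key identity
  set h : Fin nΓ → ℝ := (β⁻¹ * s) • w + (τ * β⁻¹ * s) • q + (τ * t) • c with hh
  have hMq : MΓ.mulVec q = LΓ.mulVec θ := by
    rw [hq, Matrix.mulVec_mulVec, hiM, Matrix.one_mulVec]
  have hGh : (β⁻¹ * s) • MΓ.mulVec w + (τ * β⁻¹ * s) • LΓ.mulVec θ
      + (τ * t) • MΓ.mulVec c = MΓ.mulVec h := by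
    rw [hh, Matrix.mulVec_add, Matrix.mulVec_add, Matrix.mulVec_smul, Matrix.mulVec_smul,
      Matrix.mulVec_smul, hMq]
  have key : ∀ i, (MΓ.mulVec h) i = -(β * d' i) * h i := by
    intro i
    have h1 := hstar i
    have h2 := compat' i
    have hMh := congrFun hGh i
    simp only [Pi.add_apply, Pi.smul_apply, smul_eq_mul] at hMh
    rw [← hMh]
    have hhi : h i = (β⁻¹ * s) * w i + (τ * β⁻¹ * s) * q i + (τ * t) * c i := rfl
    rw [hhi]
    linear_combination s * h1 - τ * h2 + (s * d' i * w i + τ * s * d' i * q i) * hβinv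
  -- positive definiteness forces `h = 0`
  have hzero : h = 0 := by
    by_contra hne
    have hpos := hMΓ.dotProduct_mulVec_pos hne
    have hnonpos : Star.star h ⬝ᵥ (MΓ.mulVec h) ≤ 0 := by
      rw [dotProduct]
      apply Finset.sum_nonpos
      intro i _
      simp only [Pi.star_apply, star_trivial, key i]
      nlinarith [mul_nonneg (mul_pos hβ (hd'pos i)).le (mul_self_nonneg (h i))]
    linarith
  rw [hGh, hzero, Matrix.mulVec_zero]
end

section
/- Let β > 0, κ ≥ 0, τ > 0 and L > 0 be real numbers. Let M_Ω ∈ ℝ^{n_Ω×n_Ω} and M_Γ ∈ ℝ^{n_Γ×n_Γ} be diagonal matrices with positive diagonal entries, and let L_Ω ∈ ℝ^{n_Ω×n_Ω} and L_Γ ∈ ℝ^{n_Γ×n_Γ} be symmetric positive semidefinite. Let F₁, F₂, G₁, G₂ : ℝ → ℝ be differentiable with F₁, G₁ convex and F₂, G₂ concave, and set F = F₁ + F₂, G = G₁ + G₂. Suppose U, U⁻, μ ∈ ℝ^{n_Ω} and θ ∈ ℝ^{n_Γ} satisfy: (i) M_Ω(U − U⁻) + τ·L_Ω·μ − τ·L⁻¹·ext(M_Γ·(βθ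 − μ|_Γ)) = 0; (ii) M_Γ(U|_Γ − U⁻|_Γ) + τ·L_Γ·θ + τ·β·L⁻¹·M_Γ·(βθ − μ|_Γ) = 0; (iii) M_Ω·μ + ext(M_Γ·θ) = L_Ω·U + κ·ext(L_Γ·(U|_Γ)) + M_Ω·(F₁′(U) + F₂′(U⁻)) + ext(M_Γ·(G₁′(U|_Γ) + G₂′(U⁻|_Γ))), where the derivatives are applied entrywise. Then the discrete energy inequality holds: (1/2)·UᵀL_Ω U + (1/2)·(U − U⁻)ᵀL_Ω(U − U⁻) + (κ/2)·(U|_Γ)ᵀL_Γ(U|_Γ) + (κ/2)·(U|_Γ − U⁻|_Γ)ᵀL_Γ(U|_Γ − U⁻|_Γ) + 𝟙ᵀM_Ω·F(U) + 𝟙ᵀM_Γ·G(U|_Γ) + τ·μᵀL_Ω μ + τ·θᵀL_Γ θ + τ·L⁻¹·(βθ − μ|_Γ)ᵀM_Γ(βθ − μ|_Γ) ≤ (1/2)·(U⁻)ᵀL_Ω U⁻ + (κ/2)·(U⁻|_Γ)ᵀL_Γ(U⁻|_Γ) + 𝟙ᵀM_Ω·F(U⁻) + 𝟙ᵀM_Γ·G(U⁻|_Γ).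 -/
open Matrix

lemma dot_ext {nΓ nI : ℕ} (v : Fin nΓ ⊕ Fin nI → ℝ) (x : Fin nΓ → ℝ) :
    v ⬝ᵥ extΩ x = restrΓ v ⬝ᵥ x := by
  simp [dotProduct, Fintype.sum_sum_type, extΩ, restrΓ]

lemma restr_sub {nΓ nI : ℕ} (u w : Fin nΓ ⊕ Fin nI → ℝ) :
    restrΓ (u - w) = restrΓ u - restrΓ w := rfl

lemma dot_mulVec_symm {n : Type*} [Fintype n] {A : Matrix n n ℝ} (hA : Aᵀ = A)
    (x y : n → ℝ) : x ⬝ᵥ A.mulVec y = y ⬝ᵥ A.mulVec x := by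
  rw [Matrix.dotProduct_mulVec, ← Matrix.mulVec_transpose, hA, dotProduct_comm]

lemma herm_transpose {n : Type*} [Fintype n] [DecidableEq n] {A : Matrix n n ℝ}
    (hA : A.PosSemidef) : Aᵀ = A := by
  have := hA.1
  simpa [Matrix.IsHermitian, Matrix.conjTranspose_eq_transpose_of_trivial] using this

lemma sub_dot_mulVec {n : Type*} [Fintype n] {A : Matrix n n ℝ} (hA : Aᵀ = A)
    (x y : n → ℝ) :
    (x - y) ⬝ᵥ A.mulVec x = 1/2 * (x ⬝ᵥ A.mulVec x) - 1/2 * (y ⬝ᵥ A.mulVec y)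
      + 1/2 * ((x - y) ⬝ᵥ A.mulVec (x - y)) := by
  have h := dot_mulVec_symm hA x y
  simp only [Matrix.mulVec_sub, sub_dotProduct, dotProduct_sub]
  linear_combination (1/2) * h

lemma tangent_le {F₁ F₂ : ℝ → ℝ}
    (h₁c : ConvexOn ℝ Set.univ F₁) (h₂c : ConcaveOn ℝ Set.univ F₂)
    (h₁d : Differentiable ℝ F₁) (h₂d : Differentiable ℝ F₂) (x y : ℝ) :
    F₁ y + F₂ y ≤ F₁ x + F₂ x + (deriv F₁ y + deriv F₂ x) * (y - x) := by
  rcases lt_trichotomy x y with hxy | rfl | hyx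
  · have h1 := h₁c.slope_le_deriv (Set.mem_univ x) (Set.mem_univ y) hxy (h₁d y)
    have h2 := h₂c.slope_le_deriv (Set.mem_univ x) (Set.mem_univ y) hxy (h₂d x)
    rw [slope_def_field] at h1 h2
    have hpos : 0 < y - x := by linarith
    have h1' : F₁ y - F₁ x ≤ deriv F₁ y * (y - x) := by
      have := (div_le_iff₀ hpos).mp h1; linarith
    have h2' : F₂ y - F₂ x ≤ deriv F₂ x * (y - x) := by
      have := (div_le_iff₀ hpos).mp h2; linarith
    nlinarith
  · simp
  · have h1 := h₁c.deriv_le_slope (Set.mem_univ y) (Set.mem_univ x) hyx (h₁d y)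
    have h2 := h₂c.deriv_le_slope (Set.mem_univ y) (Set.mem_univ x) hyx (h₂d x)
    rw [slope_def_field] at h1 h2
    have hpos : 0 < x - y := by linarith
    have h1' : deriv F₁ y * (x - y) ≤ F₁ x - F₁ y := by
      have := (le_div_iff₀ hpos).mp h1; linarith
    have h2' : deriv F₂ x * (x - y) ≤ F₂ x - F₂ y := by
      have := (le_div_iff₀ hpos).mp h2; linarith
    nlinarith

/-- Lemma 5.4 of the paper, case `L > 0`: the discrete
energy inequality for one time step of the finite element scheme for the
Cahn--Hilliard system with reaction rate dependent dynamic boundary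
conditions, including the reaction dissipation term
`τ·L⁻¹·(βθ − μ|_Γ)ᵀ M_Γ (βθ − μ|_Γ)`. -/
theorem discrete_energy_inequality (nΓ nI : ℕ) (hnΓ : 1 ≤ nΓ)
    (β κ τ L : ℝ) (hβ : 0 < β) (hκ : 0 ≤ κ) (hτ : 0 < τ) (hL : 0 < L)
    (MΩ : Matrix (Fin nΓ ⊕ Fin nI) (Fin nΓ ⊕ Fin nI) ℝ)
    (dΩ : Fin nΓ ⊕ Fin nI → ℝ) (hdΩ : ∀ i, 0 < dΩ i) (hMΩ : MΩ = Matrix.diagonal dΩ)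
    (MΓ : Matrix (Fin nΓ) (Fin nΓ) ℝ)
    (dΓ : Fin nΓ → ℝ) (hdΓ : ∀ i, 0 < dΓ i) (hMΓ : MΓ = Matrix.diagonal dΓ)
    (LΩ : Matrix (Fin nΓ ⊕ Fin nI) (Fin nΓ ⊕ Fin nI) ℝ) (hLΩ : LΩ.PosSemidef)
    (LΓ : Matrix (Fin nΓ) (Fin nΓ) ℝ) (hLΓ : LΓ.PosSemidef)
    (F₁ F₂ G₁ G₂ : ℝ → ℝ)
    (hF₁d : Differentiable ℝ F₁) (hF₂d : Differentiable ℝ F₂)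
    (hG₁d : Differentiable ℝ G₁) (hG₂d : Differentiable ℝ G₂)
    (hF₁c : ConvexOn ℝ Set.univ F₁) (hG₁c : ConvexOn ℝ Set.univ G₁)
    (hF₂c : ConcaveOn ℝ Set.univ F₂) (hG₂c : ConcaveOn ℝ Set.univ G₂)
    (U U' μ : Fin nΓ ⊕ Fin nI → ℝ) (θ : Fin nΓ → ℝ)
    -- (i) bulk evolution equation
    (hbulk : MΩ.mulVec (U - U') + τ • LΩ.mulVec μ
        - (τ * L⁻¹) • extΩ (MΓ.mulVec (β • θ - restrΓ μ)) = 0)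
    -- (ii) boundary evolution equation
    (hbdry : MΓ.mulVec (restrΓ U - restrΓ U') + τ • LΓ.mulVec θ
        + (τ * β * L⁻¹) • MΓ.mulVec (β • θ - restrΓ μ) = 0)
    -- (iii) the discrete chemical potential equation
    (hpot : MΩ.mulVec μ + extΩ (MΓ.mulVec θ)
        = LΩ.mulVec U + κ • extΩ (LΓ.mulVec (restrΓ U))
          + MΩ.mulVec (fun i => deriv F₁ (U i) + deriv F₂ (U' i))
          + extΩ (MΓ.mulVec (fun i => deriv G₁ (restrΓ U i) + deriv G₂ (restrΓ U' i)))) :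
    (1 / 2) * (U ⬝ᵥ LΩ.mulVec U)
      + (1 / 2) * ((U - U') ⬝ᵥ LΩ.mulVec (U - U'))
      + (κ / 2) * (restrΓ U ⬝ᵥ LΓ.mulVec (restrΓ U))
      + (κ / 2) * ((restrΓ U - restrΓ U') ⬝ᵥ LΓ.mulVec (restrΓ U - restrΓ U'))
      + (fun _ => (1 : ℝ)) ⬝ᵥ MΩ.mulVec (fun i => F₁ (U i) + F₂ (U i))
      + (fun _ => (1 : ℝ)) ⬝ᵥ MΓ.mulVec (fun i => G₁ (restrΓ U i) + G₂ (restrΓ U i))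
      + τ * (μ ⬝ᵥ LΩ.mulVec μ) + τ * (θ ⬝ᵥ LΓ.mulVec θ)
      + τ * L⁻¹ * ((β • θ - restrΓ μ) ⬝ᵥ MΓ.mulVec (β • θ - restrΓ μ))
    ≤ (1 / 2) * (U' ⬝ᵥ LΩ.mulVec U')
      + (κ / 2) * (restrΓ U' ⬝ᵥ LΓ.mulVec (restrΓ U'))
      + (fun _ => (1 : ℝ)) ⬝ᵥ MΩ.mulVec (fun i => F₁ (U' i) + F₂ (U' i))
      + (fun _ => (1 : ℝ)) ⬝ᵥ MΓ.mulVec (fun i => G₁ (restrΓ U' i) + G₂ (restrΓ U' i)) := by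
  subst hMΩ hMΓ
  -- scalar forms of the three equations
  have E1 : μ ⬝ᵥ (Matrix.diagonal dΩ).mulVec (U - U') + τ * (μ ⬝ᵥ LΩ.mulVec μ)
      - τ * L⁻¹ * (restrΓ μ ⬝ᵥ (Matrix.diagonal dΓ).mulVec (β • θ - restrΓ μ)) = 0 := by
    have h := congrArg (fun w => μ ⬝ᵥ w) hbulk
    simp only [dotProduct_add, dotProduct_sub, dotProduct_smul, smul_eq_mul,
      dotProduct_zero, dot_ext] at h
    linear_combination h
  have E2 : θ ⬝ᵥ (Matrix.diagonal dΓ).mulVec (restrΓ U - restrΓ U')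
      + τ * (θ ⬝ᵥ LΓ.mulVec θ)
      + τ * β * L⁻¹ * (θ ⬝ᵥ (Matrix.diagonal dΓ).mulVec (β • θ - restrΓ μ)) = 0 := by
    have h := congrArg (fun w => θ ⬝ᵥ w) hbdry
    simp only [dotProduct_add, dotProduct_smul, smul_eq_mul, dotProduct_zero] at h
    linear_combination h
  have E3 : (U - U') ⬝ᵥ (Matrix.diagonal dΩ).mulVec μ
      + (restrΓ U - restrΓ U') ⬝ᵥ (Matrix.diagonal dΓ).mulVec θ
      = (U - U') ⬝ᵥ LΩ.mulVec U
        + κ * ((restrΓ U - restrΓ U') ⬝ᵥ LΓ.mulVec (restrΓ U))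
        + (U - U') ⬝ᵥ (Matrix.diagonal dΩ).mulVec (fun i => deriv F₁ (U i) + deriv F₂ (U' i))
        + (restrΓ U - restrΓ U') ⬝ᵥ (Matrix.diagonal dΓ).mulVec
            (fun i => deriv G₁ (restrΓ U i) + deriv G₂ (restrΓ U' i)) := by
    have h := congrArg (fun w => (U - U') ⬝ᵥ w) hpot
    simp only [dotProduct_add, dotProduct_smul, smul_eq_mul, dot_ext, restr_sub] at h
    linear_combination h
  have I1a : μ ⬝ᵥ (Matrix.diagonal dΩ).mulVec (U - U')
      = (U - U') ⬝ᵥ (Matrix.diagonal dΩ).mulVec μ :=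
    dot_mulVec_symm (Matrix.diagonal_transpose dΩ) μ (U - U')
  have I1b : θ ⬝ᵥ (Matrix.diagonal dΓ).mulVec (restrΓ U - restrΓ U')
      = (restrΓ U - restrΓ U') ⬝ᵥ (Matrix.diagonal dΓ).mulVec θ :=
    dot_mulVec_symm (Matrix.diagonal_transpose dΓ) θ (restrΓ U - restrΓ U')
  have I2 : (β • θ - restrΓ μ) ⬝ᵥ (Matrix.diagonal dΓ).mulVec (β • θ - restrΓ μ)
      = β * (θ ⬝ᵥ (Matrix.diagonal dΓ).mulVec (β • θ - restrΓ μ))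
        - restrΓ μ ⬝ᵥ (Matrix.diagonal dΓ).mulVec (β • θ - restrΓ μ) := by
    simp [sub_dotProduct, smul_dotProduct, smul_eq_mul]
  have I3 := sub_dot_mulVec (herm_transpose hLΩ) U U'
  have I4 := sub_dot_mulVec (herm_transpose hLΓ) (restrΓ U) (restrΓ U')
  -- convexity estimates
  have hF : (fun _ => (1 : ℝ)) ⬝ᵥ (Matrix.diagonal dΩ).mulVec (fun i => F₁ (U i) + F₂ (U i))
      ≤ (fun _ => (1 : ℝ)) ⬝ᵥ (Matrix.diagonal dΩ).mulVec (fun i => F₁ (U' i) + F₂ (U' i))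
        + (U - U') ⬝ᵥ (Matrix.diagonal dΩ).mulVec (fun i => deriv F₁ (U i) + deriv F₂ (U' i)) := by
    simp only [dotProduct, Matrix.mulVec_diagonal, one_mul, Pi.sub_apply]
    rw [← Finset.sum_add_distrib]
    apply Finset.sum_le_sum
    intro i _
    have ht := tangent_le hF₁c hF₂c hF₁d hF₂d (U' i) (U i)
    nlinarith [mul_le_mul_of_nonneg_left ht (hdΩ i).le]
  have hG : (fun _ => (1 : ℝ)) ⬝ᵥ (Matrix.diagonal dΓ).mulVec
        (fun i => G₁ (restrΓ U i) + G₂ (restrΓ U i))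
      ≤ (fun _ => (1 : ℝ)) ⬝ᵥ (Matrix.diagonal dΓ).mulVec
          (fun i => G₁ (restrΓ U' i) + G₂ (restrΓ U' i))
        + (restrΓ U - restrΓ U') ⬝ᵥ (Matrix.diagonal dΓ).mulVec
            (fun i => deriv G₁ (restrΓ U i) + deriv G₂ (restrΓ U' i)) := by
    simp only [dotProduct, Matrix.mulVec_diagonal, one_mul, Pi.sub_apply]
    rw [← Finset.sum_add_distrib]
    apply Finset.sum_le_sum
    intro i _
    have ht := tangent_le hG₁c hG₂c hG₁d hG₂d (restrΓ U' i) (restrΓ U i)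
    nlinarith [mul_le_mul_of_nonneg_left ht (hdΓ i).le]
  -- master energy identity
  have master : (1 / 2) * (U ⬝ᵥ LΩ.mulVec U)
      + (1 / 2) * ((U - U') ⬝ᵥ LΩ.mulVec (U - U'))
      + (κ / 2) * (restrΓ U ⬝ᵥ LΓ.mulVec (restrΓ U))
      + (κ / 2) * ((restrΓ U - restrΓ U') ⬝ᵥ LΓ.mulVec (restrΓ U - restrΓ U'))
      + τ * (μ ⬝ᵥ LΩ.mulVec μ) + τ * (θ ⬝ᵥ LΓ.mulVec θ)
      + τ * L⁻¹ * ((β • θ - restrΓ μ) ⬝ᵥ (Matrix.diagonal dΓ).mulVec (β • θ - restrΓ μ))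
      + (U - U') ⬝ᵥ (Matrix.diagonal dΩ).mulVec (fun i => deriv F₁ (U i) + deriv F₂ (U' i))
      + (restrΓ U - restrΓ U') ⬝ᵥ (Matrix.diagonal dΓ).mulVec
          (fun i => deriv G₁ (restrΓ U i) + deriv G₂ (restrΓ U' i))
      = (1 / 2) * (U' ⬝ᵥ LΩ.mulVec U')
        + (κ / 2) * (restrΓ U' ⬝ᵥ LΓ.mulVec (restrΓ U')) := by
    linear_combination E1 + E2 - E3 - I1a - I1b + (τ * L⁻¹) * I2 - I3 - κ * I4
  linarith [master, hF, hG]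
end

section
/- Let β ≠ 0 and τ > 0 be real numbers, let M_Ω ∈ ℝ^{n_Ω×n_Ω} and M_Γ ∈ ℝ^{n_Γ×n_Γ} be arbitrary real matrices, and let L_Ω ∈ ℝ^{n_Ω×n_Ω} and L_Γ ∈ ℝ^{n_Γ×n_Γ} be symmetric matrices satisfying L_Ω·𝟙 = 0 and L_Γ·𝟙 = 0 (the all-ones vectors lie in their kernels). If U, U⁻, μ ∈ ℝ^{n_Ω} and θ ∈ ℝ^{n_Γ} satisfy the combined discrete equation M_Ω(U − U⁻) + β⁻¹·ext(M_Γ(U|_Γ − U⁻|_Γ)) + τ·L_Ω·μ + τ·β⁻¹·ext(L_Γ·θ) = 0, then the weighted discrete total mass is conserved: 𝟙ᵀM_Ω·U + β⁻¹·𝟙ᵀM_Γ·(U|_Γ) = 𝟙ᵀM_Ω·U⁻ + β⁻¹·𝟙ᵀM_Γ·(U⁻|_Γ). -/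
open Matrix

lemma ones_dot_ext {nΓ nI : ℕ} (x : Fin nΓ → ℝ) :
    (fun _ => (1 : ℝ)) ⬝ᵥ (extΩ (nI := nI) x) = (fun _ => (1 : ℝ)) ⬝ᵥ x := by
  simp [dotProduct, extΩ, Fintype.sum_sum_type]

/-- discrete mass conservation, eq. (5.29) of the paper.
If the stiffness matrices `L_Ω`, `L_Γ` are symmetric and annihilate the
all-ones vectors, then the combined discrete equation implies conservation of
the weighted discrete total mass `𝟙ᵀM_Ω·U + β⁻¹·𝟙ᵀM_Γ·U|_Γ`. -/
theorem discrete_mass_conservation (nΓ nI : ℕ) (hnΓ : 1 ≤ nΓ)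
    (β τ : ℝ) (hβ : β ≠ 0) (hτ : 0 < τ)
    (MΩ : Matrix (Fin nΓ ⊕ Fin nI) (Fin nΓ ⊕ Fin nI) ℝ)
    (MΓ : Matrix (Fin nΓ) (Fin nΓ) ℝ)
    (LΩ : Matrix (Fin nΓ ⊕ Fin nI) (Fin nΓ ⊕ Fin nI) ℝ)
    (LΓ : Matrix (Fin nΓ) (Fin nΓ) ℝ)
    (hLΩsymm : LΩ.IsSymm) (hLΓsymm : LΓ.IsSymm)
    (hLΩones : LΩ.mulVec (fun _ => (1 : ℝ)) = 0)
    (hLΓones : LΓ.mulVec (fun _ => (1 : ℝ)) = 0)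
    (U U' μ : Fin nΓ ⊕ Fin nI → ℝ) (θ : Fin nΓ → ℝ)
    (hcombined : MΩ.mulVec (U - U') + β⁻¹ • extΩ (MΓ.mulVec (restrΓ U - restrΓ U'))
        + τ • LΩ.mulVec μ + (τ * β⁻¹) • extΩ (LΓ.mulVec θ) = 0) :
    (fun _ => (1 : ℝ)) ⬝ᵥ MΩ.mulVec U + β⁻¹ * ((fun _ => (1 : ℝ)) ⬝ᵥ MΓ.mulVec (restrΓ U))
      = (fun _ => (1 : ℝ)) ⬝ᵥ MΩ.mulVec U' + β⁻¹ * ((fun _ => (1 : ℝ)) ⬝ᵥ MΓ.mulVec (restrΓ U')) := by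
  have hdot := congrArg (fun v => (fun _ => (1 : ℝ)) ⬝ᵥ v) hcombined
  simp only [dotProduct_add, dotProduct_smul, dotProduct_zero, smul_eq_mul] at hdot
  have hLΩ : (fun _ => (1 : ℝ)) ⬝ᵥ LΩ.mulVec μ = 0 := by
    rw [dotProduct_mulVec, ← mulVec_transpose, hLΩsymm.eq, hLΩones, zero_dotProduct]
  have hLΓ : (fun _ => (1 : ℝ)) ⬝ᵥ LΓ.mulVec θ = 0 := by
    rw [dotProduct_mulVec, ← mulVec_transpose, hLΓsymm.eq, hLΓones, zero_dotProduct]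
  rw [ones_dot_ext, ones_dot_ext, hLΩ, hLΓ] at hdot
  rw [mulVec_sub, mulVec_sub, dotProduct_sub, dotProduct_sub] at hdot
  linarith [hdot]
end

section
/- Let β > 0 and L ≥ 0 be real numbers and set λ := 1/(L+1), so 1 − λ = L/(L+1). Let M_Ω ∈ ℝ^{n_Ω×n_Ω} be diagonal with positive diagonal entries, with boundary block D := M_Ω|_{ΓΓ} and interior block D_I := M_Ω|_{II}, let M_Γ ∈ ℝ^{n_Γ×n_Γ} be symmetric positive definite, and let L_Ω ∈ ℝ^{n_Ω×n_Ω} and L_Γ ∈ ℝ^{n_Γ×n_Γ} be arbitrary real matrices. Define A := (1−λ)·D⁻¹·L_Ω|_{ΓΓ} + λ·D⁻¹·M_Γ + β·λ·Id, B := (1−λ)·D⁻¹·L_Ω|_{ΓI}, C := (1−λ)·M_Γ⁻¹·L_Γ + β·λ·D⁻¹·M_Γ + β²·λ·Id, and N := D·A + D·C·M_Γ⁻¹·D, and assume N is invertible. Given R_Γ ∈ ℝ^{n_Γ} and R_I ∈ ℝ^{n_I}, define μ_Γ := N⁻¹·(−D·B·D_I⁻¹·R_I + D·C·M_Γ⁻¹·R_Γ),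 μ_I := D_I⁻¹·R_I, μ := (μ_Γ, μ_I) ∈ ℝ^{n_Ω}, and θ := −M_Γ⁻¹·D·μ_Γ + M_Γ⁻¹·R_Γ ∈ ℝ^{n_Γ}. Then μ and θ satisfy the compatibility condition: (1−λ)·D⁻¹·(L_Ω·μ)|_Γ − λ·D⁻¹·M_Γ·(βθ − μ_Γ) = (1−λ)·M_Γ⁻¹·L_Γ·θ + β·λ·(βθ − μ_Γ). -/
open Matrix

/-- the paper's verification, after eq. (5.16), that the
explicit Schur-complement expressions (5.13)–(5.15) for the discrete chemical
potentials `μ` and `θ` satisfy the compatibility condition (5.8). -/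
theorem schur_solution_satisfies_compatibility (nΓ nI : ℕ) (hnΓ : 1 ≤ nΓ)
    (β L lam : ℝ) (hβ : 0 < β) (hL : 0 ≤ L) (hlam : lam = 1 / (L + 1))
    (MΩ : Matrix (Fin nΓ ⊕ Fin nI) (Fin nΓ ⊕ Fin nI) ℝ)
    (dΩ : Fin nΓ ⊕ Fin nI → ℝ) (hdΩ : ∀ i, 0 < dΩ i) (hMΩ : MΩ = Matrix.diagonal dΩ)
    (MΓ : Matrix (Fin nΓ) (Fin nΓ) ℝ) (hMΓ : MΓ.PosDef)
    (LΩ : Matrix (Fin nΓ ⊕ Fin nI) (Fin nΓ ⊕ Fin nI) ℝ)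
    (LΓ : Matrix (Fin nΓ) (Fin nΓ) ℝ)
    -- boundary and interior blocks of the bulk mass matrix
    (D : Matrix (Fin nΓ) (Fin nΓ) ℝ) (hD : D = MΩ.submatrix Sum.inl Sum.inl)
    (DI : Matrix (Fin nI) (Fin nI) ℝ) (hDI : DI = MΩ.submatrix Sum.inr Sum.inr)
    -- the matrices A, B, C of the compatibility condition (5.9)–(5.10)
    (A : Matrix (Fin nΓ) (Fin nΓ) ℝ)
    (hA : A = (1 - lam) • (D⁻¹ * LΩ.submatrix Sum.inl Sum.inl)
        + lam • (D⁻¹ * MΓ) + (β * lam) • (1 : Matrix (Fin nΓ) (Fin nΓ) ℝ))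
    (B : Matrix (Fin nΓ) (Fin nI) ℝ)
    (hB : B = (1 - lam) • (D⁻¹ * LΩ.submatrix Sum.inl Sum.inr))
    (C : Matrix (Fin nΓ) (Fin nΓ) ℝ)
    (hC : C = (1 - lam) • (MΓ⁻¹ * LΓ) + (β * lam) • (D⁻¹ * MΓ)
        + (β ^ 2 * lam) • (1 : Matrix (Fin nΓ) (Fin nΓ) ℝ))
    -- the Schur complement N, assumed invertible
    (Nmat : Matrix (Fin nΓ) (Fin nΓ) ℝ)
    (hNmat : Nmat = D * A + D * C * MΓ⁻¹ * D) (hNunit : IsUnit Nmat)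
    -- right-hand sides and the explicit expressions for μ and θ
    (RΓ : Fin nΓ → ℝ) (RI : Fin nI → ℝ)
    (μΓ : Fin nΓ → ℝ)
    (hμΓ : μΓ = Nmat⁻¹.mulVec
        (-(D * B * DI⁻¹).mulVec RI + (D * C * MΓ⁻¹).mulVec RΓ))
    (μI : Fin nI → ℝ) (hμI : μI = DI⁻¹.mulVec RI)
    (μ : Fin nΓ ⊕ Fin nI → ℝ) (hμ : μ = Sum.elim μΓ μI)
    (θ : Fin nΓ → ℝ)
    (hθ : θ = -(MΓ⁻¹ * D).mulVec μΓ + MΓ⁻¹.mulVec RΓ) :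
    -- the compatibility condition (5.8)
    (1 - lam) • D⁻¹.mulVec (restrΓ (LΩ.mulVec μ))
        - lam • D⁻¹.mulVec (MΓ.mulVec (β • θ - μΓ))
      = (1 - lam) • MΓ⁻¹.mulVec (LΓ.mulVec θ) + (β * lam) • (β • θ - μΓ) := by

  -- D is a diagonal matrix with positive entries, hence invertible
  have hD' : D = Matrix.diagonal (fun i => dΩ (Sum.inl i)) := by
    rw [hD, hMΩ]; ext i j
    simp [Matrix.submatrix_apply, Matrix.diagonal_apply, Sum.inl.injEq]
  have hDd : IsUnit D.det := by
    rw [hD', Matrix.det_diagonal]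
    exact isUnit_iff_ne_zero.2 (ne_of_gt (Finset.prod_pos fun i _ => hdΩ _))
  have hDinvD : D⁻¹ * D = 1 := Matrix.nonsing_inv_mul D hDd
  have hNd : IsUnit Nmat.det := (Matrix.isUnit_iff_isUnit_det Nmat).1 hNunit
  -- Step 1: Nmat · μΓ = −(D·B)·μI + (D·C·MΓ⁻¹)·RΓ
  have step1 : Nmat.mulVec μΓ = -(D * B).mulVec μI + (D * C * MΓ⁻¹).mulVec RΓ := by
    rw [hμΓ, Matrix.mulVec_mulVec, Matrix.mul_nonsing_inv _ hNd, Matrix.one_mulVec,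
      hμI, Matrix.mulVec_mulVec]
  -- Step 2: multiply by D⁻¹
  have hDN : D⁻¹ * Nmat = A + C * MΓ⁻¹ * D := by
    simp only [hNmat, Matrix.mul_add, ← Matrix.mul_assoc, hDinvD, Matrix.one_mul]
  have step2 : A.mulVec μΓ + (C * MΓ⁻¹ * D).mulVec μΓ
      = -(B.mulVec μI) + (C * MΓ⁻¹).mulVec RΓ := by
    have h := congrArg (fun v => D⁻¹.mulVec v) step1
    simp only [Matrix.mulVec_mulVec, Matrix.mulVec_add, Matrix.mulVec_neg, hDN] at h
    rw [Matrix.add_mulVec] at h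
    rw [h]
    congr 2
    · rw [show D⁻¹ * (D * B) = (D⁻¹ * D) * B from (Matrix.mul_assoc _ _ _).symm,
        hDinvD, Matrix.one_mul]
    · rw [show D⁻¹ * (D * C * MΓ⁻¹) = (D⁻¹ * D) * C * MΓ⁻¹ by
        simp only [Matrix.mul_assoc], hDinvD, Matrix.one_mul]
  -- Step 3: C·θ in terms of μΓ and RΓ
  have step3 : C.mulVec θ = -(C * MΓ⁻¹ * D).mulVec μΓ + (C * MΓ⁻¹).mulVec RΓ := by
    rw [hθ, Matrix.mulVec_add, Matrix.mulVec_neg, Matrix.mulVec_mulVec,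
      Matrix.mulVec_mulVec, ← Matrix.mul_assoc]
  -- Key identity: A·μΓ + B·μI = C·θ
  have key0 : A.mulVec μΓ + B.mulVec μI = C.mulVec θ := by
    rw [step3]; linear_combination step2
  have key : (1 - lam) • (D⁻¹ * LΩ.submatrix Sum.inl Sum.inl).mulVec μΓ
      + lam • (D⁻¹ * MΓ).mulVec μΓ + (β * lam) • μΓ
      + (1 - lam) • (D⁻¹ * LΩ.submatrix Sum.inl Sum.inr).mulVec μI
      = (1 - lam) • (MΓ⁻¹ * LΓ).mulVec θ + (β * lam) • (D⁻¹ * MΓ).mulVec θ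
        + (β ^ 2 * lam) • θ := by
    have h := key0
    rw [hA, hB, hC] at h
    simp only [Matrix.add_mulVec, Matrix.smul_mulVec, Matrix.one_mulVec] at h
    linear_combination h
  -- restriction of LΩ·μ to boundary coordinates
  have hres : restrΓ (LΩ.mulVec μ)
      = (LΩ.submatrix Sum.inl Sum.inl).mulVec μΓ
        + (LΩ.submatrix Sum.inl Sum.inr).mulVec μI := by
    funext i
    simp [restrΓ, Matrix.mulVec, dotProduct, hμ, Fintype.sum_sum_type,
      Matrix.submatrix_apply]
  rw [hres]
  simp only [Matrix.mulVec_add, Matrix.mulVec_sub, Matrix.mulVec_smul,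
    Matrix.mulVec_mulVec]
  funext i
  have ki := congrFun key i
  simp only [Pi.add_apply, Pi.sub_apply, Pi.smul_apply, Pi.neg_apply, smul_eq_mul] at ki ⊢
  linear_combination ki
end
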